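/- arXiv:2604.18766 — 6 statements merged into one kernel-verified Lean document; each statement's English description precedes it below -/
import Mathlib

section
/- Soundness of L_1^0 with respect to its five-valued non-deterministic matrix: for every set of formulas Γ and formula α, if Γ ⊢_{L_1^0} α then Γ ⊨_{M_1^0} α. -/
/-- Formulas of the language with ¬, ∘, ∧, ∨, →. -/
inductive Fm : Type
  | atom : Nat → Fm
  | neg : Fm → Fm
  | circ : Fm → Fm
  | conj : Fm → Fm → Fm
  | disj : Fm → Fm → Fm
  | impl : Fm → Fm → Fm

/-- Derivability from premises in the Hilbert calculus
L₁⁰ = mbCciw + (cc¹) ∘∘∘α, with modus ponens as the only rule. -/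
inductive L10 (Γ : Set Fm) : Fm → Prop
  | prem {α : Fm} : α ∈ Γ → L10 Γ α
  | a1 (α β : Fm) : L10 Γ (α.impl (β.impl α))
  | a2 (α β γ : Fm) : L10 Γ ((α.impl (β.impl γ)).impl ((α.impl β).impl (α.impl γ)))
  | a3 (α β : Fm) : L10 Γ ((α.conj β).impl α)
  | a4 (α β : Fm) : L10 Γ ((α.conj β).impl β)
  | a5 (α β : Fm) : L10 Γ (α.impl (β.impl (α.conj β)))
  | a6 (α β : Fm) : L10 Γ (α.impl (α.disj β))
  | a7 (α β : Fm) : L10 Γ (β.impl (α.disj β))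
  | a8 (α β γ : Fm) : L10 Γ ((α.impl γ).impl ((β.impl γ).impl ((α.disj β).impl γ)))
  | a9 (α β : Fm) : L10 Γ (α.disj (α.impl β))
  | tnd (α : Fm) : L10 Γ (α.disj α.neg)
  | bc1 (α β : Fm) : L10 Γ (α.circ.impl (α.impl (α.neg.impl β)))
  | ciw (α : Fm) : L10 Γ (α.circ.disj (α.conj α.neg))
  | cc1 (α : Fm) : L10 Γ α.circ.circ.circ
  | mp {α β : Fm} : L10 Γ (α.impl β) → L10 Γ α → L10 Γ β

/-- Snapshots: triples of Booleans. -/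
abbrev Trip := Bool × Bool × Bool

/-- The five-element domain B = {x : x₁∨x₂=1 and x₃∨~(x₁∧x₂)=1}. -/
def inB (x : Trip) : Prop := (x.1 || x.2.1) = true ∧ (x.2.2 || !(x.1 && x.2.1)) = true

/-- The (deterministic) multioperation for ∘ in the swap structure. -/
def circOp (x : Trip) : Trip := (!(x.1 && x.2.1), x.2.2, x.2.2 && !(x.1 && x.2.1))

/-- Valuations over the non-deterministic matrix M₁⁰. -/
structure Val10 (h : Fm → Trip) : Prop where
  mem : ∀ φ : Fm, inB (h φ)
  hconj : ∀ α β : Fm, (h (α.conj β)).1 = ((h α).1 && (h β).1)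
  hdisj : ∀ α β : Fm, (h (α.disj β)).1 = ((h α).1 || (h β).1)
  himpl : ∀ α β : Fm, (h (α.impl β)).1 = (!(h α).1 || (h β).1)
  hneg : ∀ α : Fm, (h α.neg).1 = (h α).2.1
  hcirc : ∀ α : Fm, h α.circ = circOp (h α)

/-- Semantical consequence w.r.t. M₁⁰ (designated values: first coordinate 1). -/
def NmCons10 (Γ : Set Fm) (α : Fm) : Prop :=
  ∀ h : Fm → Trip, Val10 h → (∀ γ ∈ Γ, (h γ).1 = true) → (h α).1 = true

/-- Soundness of L₁⁰ with respect to M₁⁰. -/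
theorem stmt1 (Γ : Set Fm) (α : Fm) : L10 Γ α → NmCons10 Γ α := by
  intro hd h hv hΓ
  induction hd with
  | prem hmem => exact hΓ _ hmem
  | @mp a b h1 h2 ih1 ih2 =>
      have := hv.himpl a b
      rw [ih1, ih2] at this
      simpa using this.symm
  | a1 α β => simp [hv.himpl]; cases (h α).1 <;> cases (h β).1 <;> simp
  | a2 α β γ =>
      simp [hv.himpl]
      cases (h α).1 <;> cases (h β).1 <;> cases (h γ).1 <;> simp
  | a3 α β =>
      simp [hv.himpl, hv.hconj]
      cases (h α).1 <;> cases (h β).1 <;> simp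
  | a4 α β =>
      simp [hv.himpl, hv.hconj]
      cases (h α).1 <;> cases (h β).1 <;> simp
  | a5 α β =>
      simp [hv.himpl, hv.hconj]
      cases (h α).1 <;> cases (h β).1 <;> simp
  | a6 α β =>
      simp [hv.himpl, hv.hdisj]
      cases (h α).1 <;> cases (h β).1 <;> simp
  | a7 α β =>
      simp [hv.himpl, hv.hdisj]
      cases (h α).1 <;> cases (h β).1 <;> simp
  | a8 α β γ =>
      simp [hv.himpl, hv.hdisj]
      cases (h α).1 <;> cases (h β).1 <;> cases (h γ).1 <;> simp
  | a9 α β =>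
      simp [hv.hdisj, hv.himpl]
      cases (h α).1 <;> cases (h β).1 <;> simp
  | tnd α =>
      rw [hv.hdisj, hv.hneg]
      exact (hv.mem α).1
  | bc1 α β =>
      simp [hv.himpl, hv.hneg, hv.hcirc, circOp]
      cases (h α).1 <;> cases (h α).2.1 <;> cases (h α).2.2 <;>
        cases (h β).1 <;> simp
  | ciw α =>
      simp [hv.hdisj, hv.hconj, hv.hneg, hv.hcirc, circOp]
      cases (h α).1 <;> cases (h α).2.1 <;> simp
  | cc1 α =>
      rw [hv.hcirc, hv.hcirc, hv.hcirc]
      simp [circOp]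
      cases (h α).1 <;> cases (h α).2.1 <;> cases (h α).2.2 <;> simp
end

section
/- Let Γ ∪ {α} be a set of formulas such that Γ is maximal non-trivial with respect to α in L_1^0. Then the mapping ϑ from formulas to {0,1} defined by ϑ(β)=1 if and only if β∈Γ is an L_1^0-bivaluation, i.e. it satisfies clauses (vAnd), (vOr), (vImp), (vNeg), (vConCiw) and (vCc¹). -/
/-- Γ is maximal non-trivial with respect to α in L₁⁰. -/
def MaxNonTrivial (Γ : Set Fm) (α : Fm) : Prop :=
  ¬ L10 Γ α ∧ ∀ β : Fm, β ∉ Γ → L10 (insert β Γ) α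

/-- L₁⁰-bivaluations. -/
structure Bival10 (ϑ : Fm → Bool) : Prop where
  vAnd : ∀ α β : Fm, ϑ (α.conj β) = true ↔ (ϑ α = true ∧ ϑ β = true)
  vOr : ∀ α β : Fm, ϑ (α.disj β) = true ↔ (ϑ α = true ∨ ϑ β = true)
  vImp : ∀ α β : Fm, ϑ (α.impl β) = true ↔ (ϑ α = false ∨ ϑ β = true)
  vNeg : ∀ α : Fm, ϑ α.neg = false → ϑ α = true
  vConCiw : ∀ α : Fm, ϑ α.circ = true ↔ (ϑ α = false ∨ ϑ α.neg = false)
  vCc1 : ∀ α : Fm, ϑ α.circ.circ.neg = true ↔ ϑ α.circ.circ = false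

namespace L10

theorem mono {Γ Δ : Set Fm} (h : Γ ⊆ Δ) {φ : Fm} (hφ : L10 Γ φ) : L10 Δ φ := by
  induction hφ with
  | prem h' => exact prem (h h')
  | mp _ _ ih1 ih2 => exact mp ih1 ih2
  | a1 => exact a1 _ _
  | a2 => exact a2 _ _ _
  | a3 => exact a3 _ _
  | a4 => exact a4 _ _
  | a5 => exact a5 _ _
  | a6 => exact a6 _ _
  | a7 => exact a7 _ _
  | a8 => exact a8 _ _ _
  | a9 => exact a9 _ _
  | tnd => exact tnd _
  | bc1 => exact bc1 _ _
  | ciw => exact ciw _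
  | cc1 => exact cc1 _

theorem cut {Γ : Set Fm} {β φ : Fm} (h : L10 (insert β Γ) φ) (hβ : L10 Γ β) :
    L10 Γ φ := by
  induction h with
  | prem h' =>
    rcases h' with h' | h'
    · exact h' ▸ hβ
    · exact prem h'
  | mp _ _ ih1 ih2 => exact mp ih1 ih2
  | a1 => exact a1 _ _
  | a2 => exact a2 _ _ _
  | a3 => exact a3 _ _
  | a4 => exact a4 _ _
  | a5 => exact a5 _ _
  | a6 => exact a6 _ _
  | a7 => exact a7 _ _
  | a8 => exact a8 _ _ _
  | a9 => exact a9 _ _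
  | tnd => exact tnd _
  | bc1 => exact bc1 _ _
  | ciw => exact ciw _
  | cc1 => exact cc1 _

theorem idt (Γ : Set Fm) (β : Fm) : L10 Γ (β.impl β) :=
  mp (mp (a2 β (β.impl β) β) (a1 β (β.impl β))) (a1 β β)

theorem ded {Γ : Set Fm} {β φ : Fm} (h : L10 (insert β Γ) φ) :
    L10 Γ (β.impl φ) := by
  induction h with
  | @prem γ h' =>
    rcases h' with h' | h'
    · exact h' ▸ idt Γ β
    · exact mp (a1 _ _) (prem h')
  | @mp γ δ _ _ ih1 ih2 => exact mp (mp (a2 β γ δ) ih1) ih2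
  | a1 => exact mp (a1 _ _) (a1 _ _)
  | a2 => exact mp (a1 _ _) (a2 _ _ _)
  | a3 => exact mp (a1 _ _) (a3 _ _)
  | a4 => exact mp (a1 _ _) (a4 _ _)
  | a5 => exact mp (a1 _ _) (a5 _ _)
  | a6 => exact mp (a1 _ _) (a6 _ _)
  | a7 => exact mp (a1 _ _) (a7 _ _)
  | a8 => exact mp (a1 _ _) (a8 _ _ _)
  | a9 => exact mp (a1 _ _) (a9 _ _)
  | tnd => exact mp (a1 _ _) (tnd _)
  | bc1 => exact mp (a1 _ _) (bc1 _ _)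
  | ciw => exact mp (a1 _ _) (ciw _)
  | cc1 => exact mp (a1 _ _) (cc1 _)

end L10
/-- The characteristic map of a set Γ that is maximal non-trivial w.r.t. α in L₁⁰
is an L₁⁰-bivaluation. -/
theorem stmt2 (Γ : Set Fm) (α : Fm) (hmax : MaxNonTrivial Γ α)
    (ϑ : Fm → Bool) (hϑ : ∀ β : Fm, ϑ β = true ↔ β ∈ Γ) : Bival10 ϑ := by
  have hf : ∀ β : Fm, ϑ β = false ↔ β ∉ Γ := by
    intro β; rw [← hϑ β]; simp
  have closed : ∀ φ : Fm, L10 Γ φ → φ ∈ Γ := by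
    intro φ hφ; by_contra hn
    exact hmax.1 (L10.cut (hmax.2 φ hn) hφ)
  have disj : ∀ β γ : Fm, (Fm.disj β γ) ∈ Γ → β ∈ Γ ∨ γ ∈ Γ := by
    intro β γ h; by_contra hn; push_neg at hn
    have h1 := L10.ded (hmax.2 β hn.1)
    have h2 := L10.ded (hmax.2 γ hn.2)
    exact hmax.1 (L10.mp (L10.mp (L10.mp (L10.a8 β γ α) h1) h2) (L10.prem h))
  constructor
  · intro β γ
    simp only [hϑ]
    constructor
    · intro h
      exact ⟨closed _ (L10.mp (L10.a3 β γ) (L10.prem h)),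
             closed _ (L10.mp (L10.a4 β γ) (L10.prem h))⟩
    · rintro ⟨h1, h2⟩
      exact closed _ (L10.mp (L10.mp (L10.a5 β γ) (L10.prem h1)) (L10.prem h2))
  · intro β γ
    simp only [hϑ]
    constructor
    · exact disj β γ
    · rintro (h | h)
      · exact closed _ (L10.mp (L10.a6 β γ) (L10.prem h))
      · exact closed _ (L10.mp (L10.a7 β γ) (L10.prem h))
  · intro β γ
    rw [hϑ, hf, hϑ]
    constructor
    · intro h
      by_cases hβ : β ∈ Γ
      · exact Or.inr (closed _ (L10.mp (L10.prem h) (L10.prem hβ)))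
      · exact Or.inl hβ
    · rintro (h | h)
      · rcases disj β (β.impl γ) (closed _ (L10.a9 β γ)) with h' | h'
        · exact absurd h' h
        · exact h'
      · exact closed _ (L10.mp (L10.a1 γ β) (L10.prem h))
  · intro β
    rw [hf, hϑ]
    intro h
    rcases disj β β.neg (closed _ (L10.tnd β)) with h' | h'
    · exact h'
    · exact absurd h' h
  · intro β
    rw [hϑ, hf, hf]
    constructor
    · intro h
      by_contra hn; push_neg at hn
      exact hmax.1 (L10.mp (L10.mp (L10.mp (L10.bc1 β α) (L10.prem h))
        (L10.prem hn.1)) (L10.prem hn.2))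
    · intro h
      rcases disj β.circ (β.conj β.neg) (closed _ (L10.ciw β)) with h' | h'
      · exact h'
      · rcases h with h | h
        · exact absurd (closed _ (L10.mp (L10.a3 β β.neg) (L10.prem h'))) h
        · exact absurd (closed _ (L10.mp (L10.a4 β β.neg) (L10.prem h'))) h
  · intro β
    rw [hϑ, hf]
    constructor
    · intro h hc
      exact hmax.1 (L10.mp (L10.mp (L10.mp (L10.bc1 β.circ.circ α)
        (L10.prem (closed _ (L10.cc1 β)))) (L10.prem hc)) (L10.prem h))
    · intro h
      rcases disj β.circ.circ β.circ.circ.neg (closed _ (L10.tnd β.circ.circ)) with h' | h'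
      · exact absurd h' h
      · exact h'
end

section
/- Representation theorem for L_1^0: given any L_1^0-bivaluation ϑ, the function h defined on formulas by h(α) = (ϑ(α), ϑ(¬α), ϑ(¬∘α)) takes values in the five-element domain B, is a valuation over the non-deterministic matrix M_1^0, and satisfies ϑ(α)=1 if and only if h(α) is designated, for every formula α. -/
/-- Representation theorem: any L₁⁰-bivaluation ϑ induces a valuation
h(α) = (ϑ(α), ϑ(¬α), ϑ(¬∘α)) over M₁⁰ preserving designation. -/
theorem stmt3 (ϑ : Fm → Bool) (hbi : Bival10 ϑ) (h : Fm → Trip)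
    (hdef : ∀ α : Fm, h α = (ϑ α, ϑ α.neg, ϑ α.circ.neg)) :
    (∀ α : Fm, inB (h α)) ∧ Val10 h ∧ (∀ α : Fm, ϑ α = true ↔ (h α).1 = true) := by
  have circ_val : ∀ α : Fm, ϑ α.circ = (!(ϑ α && ϑ α.neg)) := by
    intro α
    have hi := hbi.vConCiw α
    rcases Bool.eq_false_or_eq_true (ϑ α) with ha | ha <;>
      rcases Bool.eq_false_or_eq_true (ϑ α.neg) with hn | hn <;>
      rcases Bool.eq_false_or_eq_true (ϑ α.circ) with hc | hc <;>
      simp_all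
  have hmem : ∀ α : Fm, inB (h α) := by
    intro α
    rw [hdef α]
    constructor
    · rcases Bool.eq_false_or_eq_true (ϑ α.neg) with hn | hn
      · simp [hn]
      · simp [hbi.vNeg α hn]
    · rcases Bool.eq_false_or_eq_true (ϑ α && ϑ α.neg) with hn | hn
      · have hc : ϑ α.circ = false := by rw [circ_val α, hn]; rfl
        rcases Bool.eq_false_or_eq_true (ϑ α.circ.neg) with h2 | h2
        · simp [h2]
        · exact absurd (hbi.vNeg α.circ h2) (by simp [hc])
      · simp [hn]
  have hsnd : ∀ α : Fm, ϑ α.circ.circ.neg = (ϑ α.circ.neg && ϑ α.circ) := by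
    intro α
    rcases Bool.eq_false_or_eq_true (ϑ α.circ.circ.neg) with hc | hc <;> rw [hc]
    · have hcc : ϑ α.circ.circ = false := (hbi.vCc1 α).1 hc
      have h2 := hbi.vConCiw α.circ
      rcases Bool.eq_false_or_eq_true (ϑ α.circ) with h3 | h3 <;>
        rcases Bool.eq_false_or_eq_true (ϑ α.circ.neg) with h4 | h4 <;> simp_all
    · have hcc : ϑ α.circ.circ = true := by
        rcases Bool.eq_false_or_eq_true (ϑ α.circ.circ) with h2 | h2
        · exact h2
        · exact absurd ((hbi.vCc1 α).2 h2) (by simp [hc])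
      have h2 := hbi.vConCiw α.circ
      rcases Bool.eq_false_or_eq_true (ϑ α.circ) with h3 | h3 <;>
        rcases Bool.eq_false_or_eq_true (ϑ α.circ.neg) with h4 | h4 <;> simp_all
  have hcirc : ∀ α : Fm, h α.circ = circOp (h α) := by
    intro α
    rw [hdef α.circ, hdef α, circOp]
    refine Prod.ext ?_ (Prod.ext ?_ ?_)
    · exact circ_val α
    · rfl
    · show ϑ α.circ.circ.neg = _
      rw [hsnd α, circ_val α, Bool.and_comm]
  refine ⟨hmem, ⟨hmem, ?_, ?_, ?_, ?_, hcirc⟩, ?_⟩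
  · intro α β
    rw [hdef (α.conj β), hdef α, hdef β]
    have := hbi.vAnd α β
    rcases Bool.eq_false_or_eq_true (ϑ α) with ha | ha <;>
      rcases Bool.eq_false_or_eq_true (ϑ β) with hb | hb <;> simp_all
  · intro α β
    rw [hdef (α.disj β), hdef α, hdef β]
    have := hbi.vOr α β
    rcases Bool.eq_false_or_eq_true (ϑ α) with ha | ha <;>
      rcases Bool.eq_false_or_eq_true (ϑ β) with hb | hb <;> simp_all
  · intro α β
    rw [hdef (α.impl β), hdef α, hdef β]
    have := hbi.vImp α β
    rcases Bool.eq_false_or_eq_true (ϑ α) with ha | ha <;>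
      rcases Bool.eq_false_or_eq_true (ϑ β) with hb | hb <;> simp_all
  · intro α
    rw [hdef α.neg, hdef α]
  · intro α
    rw [hdef α]
end

section
/- Completeness of L_1^0 with respect to its five-valued non-deterministic matrix: for every set of formulas Γ and formula α, if Γ ⊨_{M_1^0} α then Γ ⊢_{L_1^0} α. -/
/-- Monotonicity of derivability. -/
lemma L10.mono_s4 {Γ Δ : Set Fm} {α : Fm} (hΓΔ : Γ ⊆ Δ) (h : L10 Γ α) : L10 Δ α := by
  induction h with
  | prem hm => exact .prem (hΓΔ hm)
  | a1 a b => exact .a1 a b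
  | a2 a b c => exact .a2 a b c
  | a3 a b => exact .a3 a b
  | a4 a b => exact .a4 a b
  | a5 a b => exact .a5 a b
  | a6 a b => exact .a6 a b
  | a7 a b => exact .a7 a b
  | a8 a b c => exact .a8 a b c
  | a9 a b => exact .a9 a b
  | tnd a => exact .tnd a
  | bc1 a b => exact .bc1 a b
  | ciw a => exact .ciw a
  | cc1 a => exact .cc1 a
  | mp _ _ ih1 ih2 => exact ih1.mp ih2

/-- Compactness: every derivation uses finitely many premises. -/
lemma L10.compact {Γ : Set Fm} {α : Fm} (h : L10 Γ α) :
    ∃ Γ' : Set Fm, Γ' ⊆ Γ ∧ Γ'.Finite ∧ L10 Γ' α := by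
  induction h with
  | prem hm => exact ⟨{_}, by simpa using hm, Set.finite_singleton _, .prem rfl⟩
  | a1 a b => exact ⟨∅, Set.empty_subset _, Set.finite_empty, .a1 a b⟩
  | a2 a b c => exact ⟨∅, Set.empty_subset _, Set.finite_empty, .a2 a b c⟩
  | a3 a b => exact ⟨∅, Set.empty_subset _, Set.finite_empty, .a3 a b⟩
  | a4 a b => exact ⟨∅, Set.empty_subset _, Set.finite_empty, .a4 a b⟩
  | a5 a b => exact ⟨∅, Set.empty_subset _, Set.finite_empty, .a5 a b⟩
  | a6 a b => exact ⟨∅, Set.empty_subset _, Set.finite_empty, .a6 a b⟩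
  | a7 a b => exact ⟨∅, Set.empty_subset _, Set.finite_empty, .a7 a b⟩
  | a8 a b c => exact ⟨∅, Set.empty_subset _, Set.finite_empty, .a8 a b c⟩
  | a9 a b => exact ⟨∅, Set.empty_subset _, Set.finite_empty, .a9 a b⟩
  | tnd a => exact ⟨∅, Set.empty_subset _, Set.finite_empty, .tnd a⟩
  | bc1 a b => exact ⟨∅, Set.empty_subset _, Set.finite_empty, .bc1 a b⟩
  | ciw a => exact ⟨∅, Set.empty_subset _, Set.finite_empty, .ciw a⟩
  | cc1 a => exact ⟨∅, Set.empty_subset _, Set.finite_empty, .cc1 a⟩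
  | mp _ _ ih1 ih2 =>
    obtain ⟨A, hA, hAf, hdA⟩ := ih1
    obtain ⟨B, hB, hBf, hdB⟩ := ih2
    exact ⟨A ∪ B, Set.union_subset hA hB, hAf.union hBf,
      (hdA.mono_s4 Set.subset_union_left).mp (hdB.mono_s4 Set.subset_union_right)⟩

lemma L10.impSelf (Γ : Set Fm) (φ : Fm) : L10 Γ (φ.impl φ) :=
  ((L10.a2 φ (φ.impl φ) φ).mp (L10.a1 φ (φ.impl φ))).mp (L10.a1 φ φ)

/-- Deduction theorem. -/
lemma L10.deduction {Γ : Set Fm} {φ ψ : Fm} (h : L10 (insert φ Γ) ψ) :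
    L10 Γ (φ.impl ψ) := by
  induction h with
  | prem hm =>
    rcases Set.mem_insert_iff.mp hm with rfl | hm
    · exact L10.impSelf Γ _
    · exact (L10.a1 _ _).mp (.prem hm)
  | a1 a b => exact (L10.a1 _ _).mp (.a1 a b)
  | a2 a b c => exact (L10.a1 _ _).mp (.a2 a b c)
  | a3 a b => exact (L10.a1 _ _).mp (.a3 a b)
  | a4 a b => exact (L10.a1 _ _).mp (.a4 a b)
  | a5 a b => exact (L10.a1 _ _).mp (.a5 a b)
  | a6 a b => exact (L10.a1 _ _).mp (.a6 a b)
  | a7 a b => exact (L10.a1 _ _).mp (.a7 a b)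
  | a8 a b c => exact (L10.a1 _ _).mp (.a8 a b c)
  | a9 a b => exact (L10.a1 _ _).mp (.a9 a b)
  | tnd a => exact (L10.a1 _ _).mp (.tnd a)
  | bc1 a b => exact (L10.a1 _ _).mp (.bc1 a b)
  | ciw a => exact (L10.a1 _ _).mp (.ciw a)
  | cc1 a => exact (L10.a1 _ _).mp (.cc1 a)
  | mp _ _ ih1 ih2 => exact ((L10.a2 _ _ _).mp ih1).mp ih2

/-- A finite subset of the union of a nonempty chain lies in one member. -/
lemma finite_subset_chain {c : Set (Set Fm)} (hc : IsChain (· ⊆ ·) c)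
    {s₀ : Set Fm} (hs₀ : s₀ ∈ c) {F : Set Fm} (hF : F.Finite) (hsub : F ⊆ ⋃₀ c) :
    ∃ s ∈ c, F ⊆ s := by
  have H : ∀ {F : Set Fm}, F.Finite → F ⊆ ⋃₀ c → ∃ s ∈ c, F ⊆ s := by
    intro F hF
    refine Set.Finite.induction_on (motive := fun F _ => F ⊆ ⋃₀ c → ∃ s ∈ c, F ⊆ s) F hF (fun _ => ⟨s₀, hs₀, Set.empty_subset _⟩) ?_
    intro a F' ha hFf ih hsub
    obtain ⟨s, hs, hFs⟩ := ih (fun x hx => hsub (Set.mem_insert_of_mem _ hx))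
    obtain ⟨t, ht, hat⟩ := hsub (Set.mem_insert a F')
    rcases hc.total hs ht with hst | hts
    · exact ⟨t, ht, Set.insert_subset hat (hFs.trans hst)⟩
    · exact ⟨s, hs, Set.insert_subset (hts hat) hFs⟩
  exact H hF hsub

/-- Completeness of L₁⁰ with respect to M₁⁰. -/
theorem stmt4 (Γ : Set Fm) (α : Fm) : NmCons10 Γ α → L10 Γ α := by
  classical
  intro hsem
  by_contra hnd
  -- Lindenbaum: extend Γ to a maximal non-trivial (w.r.t. α) theory Δ.
  have hΓS : Γ ∈ {s : Set Fm | Γ ⊆ s ∧ ¬ L10 s α} := ⟨Set.Subset.rfl, hnd⟩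
  obtain ⟨Δ, hΓΔ, hΔS, hΔmax⟩ := zorn_subset_nonempty {s : Set Fm | Γ ⊆ s ∧ ¬ L10 s α}
    (by
      intro c hcS hchain hcne
      obtain ⟨s₀, hs₀⟩ := hcne
      refine ⟨⋃₀ c, ⟨(hcS hs₀).1.trans (Set.subset_sUnion_of_mem hs₀), ?_⟩,
        fun s hs => Set.subset_sUnion_of_mem hs⟩
      intro hder
      obtain ⟨F, hF, hFf, hFd⟩ := hder.compact
      obtain ⟨s, hs, hFs⟩ := finite_subset_chain hchain hs₀ hFf hF
      exact (hcS hs).2 (hFd.mono_s4 hFs)) Γ hΓS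
  obtain ⟨hΓΔ', hΔnd⟩ := hΔS
  -- maximality : anything outside Δ makes α derivable
  have hmaxl : ∀ φ : Fm, φ ∉ Δ → L10 (insert φ Δ) α := by
    intro φ hφ
    by_contra hφd
    have : insert φ Δ ∈ {s : Set Fm | Γ ⊆ s ∧ ¬ L10 s α} :=
      ⟨hΓΔ'.trans (Set.subset_insert _ _), hφd⟩
    exact hφ (hΔmax this (Set.subset_insert _ _) (Set.mem_insert _ _))
  -- Δ is deductively closed
  have hcl : ∀ φ : Fm, L10 Δ φ → φ ∈ Δ := by
    intro φ hφ
    by_contra hφn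
    exact hΔnd (((hmaxl φ hφn).deduction).mp hφ)
  -- disjunction property
  have hdp : ∀ φ ψ : Fm, φ.disj ψ ∈ Δ → φ ∈ Δ ∨ ψ ∈ Δ := by
    intro φ ψ hd
    by_contra hn
    push_neg at hn
    have h1 : L10 Δ (φ.impl α) := (hmaxl φ hn.1).deduction
    have h2 : L10 Δ (ψ.impl α) := (hmaxl ψ hn.2).deduction
    exact hΔnd (((L10.a8 φ ψ α).mp h1).mp h2 |>.mp (.prem hd))
  have htnd : ∀ φ : Fm, φ ∈ Δ ∨ φ.neg ∈ Δ := fun φ => hdp _ _ (hcl _ (.tnd φ))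
  -- Δ-mp
  have hΔmp : ∀ φ ψ : Fm, φ.impl ψ ∈ Δ → φ ∈ Δ → ψ ∈ Δ :=
    fun φ ψ h1 h2 => hcl _ ((L10.prem h1).mp (.prem h2))
  -- consistency characterization of ∘
  have hcircIff : ∀ φ : Fm, φ.circ ∈ Δ ↔ ¬(φ ∈ Δ ∧ φ.neg ∈ Δ) := by
    intro φ
    constructor
    · rintro hc ⟨h1, h2⟩
      exact hΔnd ((((L10.bc1 φ α).mp (.prem hc)).mp (.prem h1)).mp (.prem h2))
    · intro hn
      rcases hdp _ _ (hcl _ (.ciw φ)) with hc | hcn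
      · exact hc
      · exact absurd ⟨hΔmp _ _ (hcl _ (.a3 φ φ.neg)) hcn,
          hΔmp _ _ (hcl _ (.a4 φ φ.neg)) hcn⟩ hn
  -- behaviour of ¬∘∘ from (cc¹)
  have hkey3 : ∀ φ : Fm, φ.circ.circ.neg ∈ Δ ↔ (φ.circ ∈ Δ ∧ φ.circ.neg ∈ Δ) := by
    intro φ
    have hcc : ¬(φ.circ.circ ∈ Δ ∧ φ.circ.circ.neg ∈ Δ) :=
      (hcircIff φ.circ.circ).mp (hcl _ (.cc1 φ))
    constructor
    · intro h
      have : φ.circ.circ ∉ Δ := fun hx => hcc ⟨hx, h⟩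
      by_contra hn
      exact this ((hcircIff φ.circ).mpr (fun hx => hn hx))
    · intro h
      have : φ.circ.circ ∉ Δ := fun hx => ((hcircIff φ.circ).mp hx) h
      rcases htnd φ.circ.circ with hx | hx
      · exact absurd hx this
      · exact hx
  -- the canonical valuation
  set h : Fm → Trip := fun φ => (decide (φ ∈ Δ), decide (φ.neg ∈ Δ), decide (φ.circ.neg ∈ Δ))
    with hdef
  have hfst : ∀ φ : Fm, (h φ).1 = decide (φ ∈ Δ) := fun _ => rfl
  have hval : Val10 h := by
    constructor
    · intro φ
      constructor
      · simp only [hdef, Bool.or_eq_true, decide_eq_true_eq]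
        exact htnd φ
      · by_cases hb : φ ∈ Δ ∧ φ.neg ∈ Δ
        · have hc : φ.circ.neg ∈ Δ :=
            (htnd φ.circ).resolve_left (fun hx => (hcircIff φ).mp hx hb)
          simp [hdef, hc]
        · rcases not_and_or.mp hb with hx | hx <;> simp [hdef, hx]
    · intro a b
      simp only [hdef]
      rw [← Bool.decide_and, decide_eq_decide]
      constructor
      · intro hc
        exact ⟨hΔmp _ _ (hcl _ (.a3 a b)) hc, hΔmp _ _ (hcl _ (.a4 a b)) hc⟩
      · rintro ⟨h1, h2⟩
        exact hcl _ (((L10.a5 a b).mp (.prem h1)).mp (.prem h2))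
    · intro a b
      simp only [hdef]
      rw [← Bool.decide_or, decide_eq_decide]
      constructor
      · exact hdp a b
      · rintro (h1 | h1)
        · exact hcl _ ((L10.a6 a b).mp (.prem h1))
        · exact hcl _ ((L10.a7 a b).mp (.prem h1))
    · intro a b
      simp only [hdef]
      rw [← decide_not, ← Bool.decide_or, decide_eq_decide]
      constructor
      · intro hi
        by_cases ha : a ∈ Δ
        · exact Or.inr (hΔmp _ _ hi ha)
        · exact Or.inl ha
      · rintro (h1 | h1)
        · rcases hdp _ _ (hcl _ (.a9 a b)) with hx | hx
          · exact absurd hx h1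
          · exact hx
        · exact hcl _ ((L10.a1 b a).mp (.prem h1))
    · intro a; rfl
    · intro a
      refine Prod.ext ?_ (Prod.ext ?_ ?_)
      · show decide (a.circ ∈ Δ) = !(decide (a ∈ Δ) && decide (a.neg ∈ Δ))
        rw [← Bool.decide_and, ← decide_not, decide_eq_decide]
        exact hcircIff a
      · rfl
      · show decide (a.circ.circ.neg ∈ Δ) =
          (decide (a.circ.neg ∈ Δ) && !(decide (a ∈ Δ) && decide (a.neg ∈ Δ)))
        rw [← Bool.decide_and, ← decide_not, ← Bool.decide_and, decide_eq_decide]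
        rw [show (¬(a ∈ Δ ∧ a.neg ∈ Δ)) = (a.circ ∈ Δ) from propext (hcircIff a).symm]
        rw [show (a.circ.neg ∈ Δ ∧ a.circ ∈ Δ) = (a.circ ∈ Δ ∧ a.circ.neg ∈ Δ) from
          propext and_comm]
        exact hkey3 a
  have hdes : ∀ γ ∈ Γ, (h γ).1 = true := by
    intro γ hγ
    simp only [hdef, decide_eq_true_eq]
    exact hΓΔ' hγ
  have := hsem h hval hdes
  simp only [hdef, decide_eq_true_eq] at this
  exact hΔnd (.prem this)
end

section
/- Soundness and completeness of L_1^2: for every set of formulas Γ and formula α, Γ ⊢_{L_1^2} α if and only if Γ ⊨_{M_1^2} α. -/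
/-- Biimplication α↔β := (α→β)∧(β→α). -/
def Fm.biim (a b : Fm) : Fm := (a.impl b).conj (b.impl a)

/-- Derivability from premises in the Hilbert calculus
L₁² = mbCciw + (cc¹) ∘∘∘α + (cf) ¬¬α→α + (ce) α→¬¬α + (ip¹) ¬∘¬α ↔ ¬∘α. -/
inductive L12 (Γ : Set Fm) : Fm → Prop
  | prem {α : Fm} : α ∈ Γ → L12 Γ α
  | a1 (α β : Fm) : L12 Γ (α.impl (β.impl α))
  | a2 (α β γ : Fm) : L12 Γ ((α.impl (β.impl γ)).impl ((α.impl β).impl (α.impl γ)))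
  | a3 (α β : Fm) : L12 Γ ((α.conj β).impl α)
  | a4 (α β : Fm) : L12 Γ ((α.conj β).impl β)
  | a5 (α β : Fm) : L12 Γ (α.impl (β.impl (α.conj β)))
  | a6 (α β : Fm) : L12 Γ (α.impl (α.disj β))
  | a7 (α β : Fm) : L12 Γ (β.impl (α.disj β))
  | a8 (α β γ : Fm) : L12 Γ ((α.impl γ).impl ((β.impl γ).impl ((α.disj β).impl γ)))
  | a9 (α β : Fm) : L12 Γ (α.disj (α.impl β))
  | tnd (α : Fm) : L12 Γ (α.disj α.neg)
  | bc1 (α β : Fm) : L12 Γ (α.circ.impl (α.impl (α.neg.impl β)))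
  | ciw (α : Fm) : L12 Γ (α.circ.disj (α.conj α.neg))
  | cc1 (α : Fm) : L12 Γ α.circ.circ.circ
  | cf (α : Fm) : L12 Γ (α.neg.neg.impl α)
  | ce (α : Fm) : L12 Γ (α.impl α.neg.neg)
  | ip1 (α : Fm) : L12 Γ (Fm.biim α.neg.circ.neg α.circ.neg)
  | mp {α β : Fm} : L12 Γ (α.impl β) → L12 Γ α → L12 Γ β

/-- The deterministic negation of M₁²: ¬x = (x₂, x₁, x₃). -/
def negOp (x : Trip) : Trip := (x.2.1, x.1, x.2.2)

/-- Valuations over the non-deterministic matrix M₁². -/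
structure Val12 (h : Fm → Trip) : Prop where
  mem : ∀ φ : Fm, inB (h φ)
  hconj : ∀ α β : Fm, (h (α.conj β)).1 = ((h α).1 && (h β).1)
  hdisj : ∀ α β : Fm, (h (α.disj β)).1 = ((h α).1 || (h β).1)
  himpl : ∀ α β : Fm, (h (α.impl β)).1 = (!(h α).1 || (h β).1)
  hneg : ∀ α : Fm, h α.neg = negOp (h α)
  hcirc : ∀ α : Fm, h α.circ = circOp (h α)

/-- Semantical consequence w.r.t. M₁² (designated values: first coordinate 1). -/
def NmCons12 (Γ : Set Fm) (α : Fm) : Prop :=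
  ∀ h : Fm → Trip, Val12 h → (∀ γ ∈ Γ, (h γ).1 = true) → (h α).1 = true


namespace L12aux

theorem mono {Γ Δ : Set Fm} (hs : Γ ⊆ Δ) {β : Fm} (h : L12 Γ β) : L12 Δ β := by
  induction h with
  | prem h => exact L12.prem (hs h)
  | mp _ _ ih1 ih2 => exact L12.mp ih1 ih2
  | a1 a b => exact L12.a1 a b
  | a2 a b c => exact L12.a2 a b c
  | a3 a b => exact L12.a3 a b
  | a4 a b => exact L12.a4 a b
  | a5 a b => exact L12.a5 a b
  | a6 a b => exact L12.a6 a b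
  | a7 a b => exact L12.a7 a b
  | a8 a b c => exact L12.a8 a b c
  | a9 a b => exact L12.a9 a b
  | tnd a => exact L12.tnd a
  | bc1 a b => exact L12.bc1 a b
  | ciw a => exact L12.ciw a
  | cc1 a => exact L12.cc1 a
  | cf a => exact L12.cf a
  | ce a => exact L12.ce a
  | ip1 a => exact L12.ip1 a

theorem imp_id (Γ : Set Fm) (β : Fm) : L12 Γ (β.impl β) :=
  L12.mp (L12.mp (L12.a2 β (β.impl β) β) (L12.a1 β (β.impl β))) (L12.a1 β β)

theorem ded {Γ : Set Fm} {β γ : Fm} (h : L12 (insert β Γ) γ) : L12 Γ (β.impl γ) := by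
  induction h with
  | prem h =>
    rcases h with rfl | h
    · exact imp_id Γ _
    · exact L12.mp (L12.a1 _ _) (L12.prem h)
  | mp _ _ ih1 ih2 => exact L12.mp (L12.mp (L12.a2 _ _ _) ih1) ih2
  | a1 a b => exact L12.mp (L12.a1 _ _) (L12.a1 a b)
  | a2 a b c => exact L12.mp (L12.a1 _ _) (L12.a2 a b c)
  | a3 a b => exact L12.mp (L12.a1 _ _) (L12.a3 a b)
  | a4 a b => exact L12.mp (L12.a1 _ _) (L12.a4 a b)
  | a5 a b => exact L12.mp (L12.a1 _ _) (L12.a5 a b)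
  | a6 a b => exact L12.mp (L12.a1 _ _) (L12.a6 a b)
  | a7 a b => exact L12.mp (L12.a1 _ _) (L12.a7 a b)
  | a8 a b c => exact L12.mp (L12.a1 _ _) (L12.a8 a b c)
  | a9 a b => exact L12.mp (L12.a1 _ _) (L12.a9 a b)
  | tnd a => exact L12.mp (L12.a1 _ _) (L12.tnd a)
  | bc1 a b => exact L12.mp (L12.a1 _ _) (L12.bc1 a b)
  | ciw a => exact L12.mp (L12.a1 _ _) (L12.ciw a)
  | cc1 a => exact L12.mp (L12.a1 _ _) (L12.cc1 a)
  | cf a => exact L12.mp (L12.a1 _ _) (L12.cf a)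
  | ce a => exact L12.mp (L12.a1 _ _) (L12.ce a)
  | ip1 a => exact L12.mp (L12.a1 _ _) (L12.ip1 a)

theorem cut {Γ : Set Fm} {β γ : Fm} (h1 : L12 Γ β) (h2 : L12 (insert β Γ) γ) :
    L12 Γ γ := L12.mp (ded h2) h1

/-- derivations from a monotone chain factor through a stage -/
theorem chain {D : ℕ → Set Fm} (hD : ∀ m n, m ≤ n → D m ⊆ D n) {β : Fm}
    (h : L12 (⋃ n, D n) β) : ∃ n, L12 (D n) β := by
  induction h with
  | prem h =>
    obtain ⟨n, hn⟩ := Set.mem_iUnion.1 h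
    exact ⟨n, L12.prem hn⟩
  | mp _ _ ih1 ih2 =>
    obtain ⟨n1, h1⟩ := ih1
    obtain ⟨n2, h2⟩ := ih2
    exact ⟨max n1 n2, L12.mp (mono (hD _ _ (le_max_left _ _)) h1)
      (mono (hD _ _ (le_max_right _ _)) h2)⟩
  | a1 a b => exact ⟨0, L12.a1 a b⟩
  | a2 a b c => exact ⟨0, L12.a2 a b c⟩
  | a3 a b => exact ⟨0, L12.a3 a b⟩
  | a4 a b => exact ⟨0, L12.a4 a b⟩
  | a5 a b => exact ⟨0, L12.a5 a b⟩
  | a6 a b => exact ⟨0, L12.a6 a b⟩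
  | a7 a b => exact ⟨0, L12.a7 a b⟩
  | a8 a b c => exact ⟨0, L12.a8 a b c⟩
  | a9 a b => exact ⟨0, L12.a9 a b⟩
  | tnd a => exact ⟨0, L12.tnd a⟩
  | bc1 a b => exact ⟨0, L12.bc1 a b⟩
  | ciw a => exact ⟨0, L12.ciw a⟩
  | cc1 a => exact ⟨0, L12.cc1 a⟩
  | cf a => exact ⟨0, L12.cf a⟩
  | ce a => exact ⟨0, L12.ce a⟩
  | ip1 a => exact ⟨0, L12.ip1 a⟩

/-- encoding of formulas into ℕ -/
def enc : Fm → ℕ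
  | .atom n => Nat.pair 0 n
  | .neg a => Nat.pair 1 (enc a)
  | .circ a => Nat.pair 2 (enc a)
  | .conj a b => Nat.pair 3 (Nat.pair (enc a) (enc b))
  | .disj a b => Nat.pair 4 (Nat.pair (enc a) (enc b))
  | .impl a b => Nat.pair 5 (Nat.pair (enc a) (enc b))

theorem enc_inj : Function.Injective enc := by
  intro x
  induction x with
  | atom n => intro y hy; cases y <;> simp [enc, Nat.pair_eq_pair] at hy <;> simp [hy]
  | neg a ih => intro y hy; cases y <;> simp [enc, Nat.pair_eq_pair] at hy <;>
      simp [ih hy]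
  | circ a ih => intro y hy; cases y <;> simp [enc, Nat.pair_eq_pair] at hy <;>
      simp [ih hy]
  | conj a b iha ihb => intro y hy; cases y <;> simp [enc, Nat.pair_eq_pair] at hy <;>
      simp [iha hy.1, ihb hy.2]
  | disj a b iha ihb => intro y hy; cases y <;> simp [enc, Nat.pair_eq_pair] at hy <;>
      simp [iha hy.1, ihb hy.2]
  | impl a b iha ihb => intro y hy; cases y <;> simp [enc, Nat.pair_eq_pair] at hy <;>
      simp [iha hy.1, ihb hy.2]

instance : Countable Fm := ⟨enc, enc_inj⟩
instance : Nonempty Fm := ⟨.atom 0⟩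

end L12aux

namespace L12aux

open Classical in
noncomputable def stage (Γ : Set Fm) (α : Fm) (e : ℕ → Fm) : ℕ → Set Fm
  | 0 => Γ
  | n+1 =>
    if L12 (insert (e n) (stage Γ α e n)) α then stage Γ α e n
    else insert (e n) (stage Γ α e n)

theorem stage_mono (Γ : Set Fm) (α : Fm) (e : ℕ → Fm) :
    ∀ m n, m ≤ n → stage Γ α e m ⊆ stage Γ α e n := by
  have : ∀ n, stage Γ α e n ⊆ stage Γ α e (n+1) := by
    intro n
    simp only [stage]
    split
    · exact subset_rfl
    · exact Set.subset_insert _ _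
  intro m n h
  exact monotone_nat_of_le_succ this h

theorem stage_not {Γ : Set Fm} {α : Fm} (e : ℕ → Fm) (hn : ¬ L12 Γ α) :
    ∀ n, ¬ L12 (stage Γ α e n) α := by
  intro n
  induction n with
  | zero => exact hn
  | succ n ih =>
    simp only [stage]
    split
    · exact ih
    · assumption

theorem lindenbaum {Γ : Set Fm} {α : Fm} (hn : ¬ L12 Γ α) :
    ∃ Δ : Set Fm, Γ ⊆ Δ ∧ ¬ L12 Δ α ∧ (∀ β, L12 Δ β → β ∈ Δ) ∧
      (∀ β, β ∉ Δ → L12 (insert β Δ) α) := by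
  obtain ⟨e, he⟩ := exists_surjective_nat Fm
  refine ⟨⋃ n, stage Γ α e n, ?_, ?_, ?_, ?_⟩
  · exact Set.subset_iUnion (stage Γ α e) 0
  · intro h
    obtain ⟨n, hn'⟩ := chain (stage_mono Γ α e) h
    exact stage_not e hn n hn'
  · -- closure
    intro β hb
    by_contra hmem
    obtain ⟨n, rfl⟩ := he β
    have hcond : L12 (insert (e n) (stage Γ α e n)) α := by
      by_contra hc
      apply hmem
      apply Set.mem_iUnion.2 ⟨n+1, ?_⟩
      simp only [stage]
      rw [if_neg hc]
      exact Set.mem_insert _ _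
    have h2 : L12 (insert (e n) (⋃ n, stage Γ α e n)) α :=
      mono (Set.insert_subset_insert (Set.subset_iUnion _ n)) hcond
    have h3 := cut hb h2
    obtain ⟨m, hm⟩ := chain (stage_mono Γ α e) h3
    exact stage_not e hn m hm
  · intro β hmem
    obtain ⟨n, rfl⟩ := he β
    have hcond : L12 (insert (e n) (stage Γ α e n)) α := by
      by_contra hc
      apply hmem
      apply Set.mem_iUnion.2 ⟨n+1, ?_⟩
      simp only [stage]
      rw [if_neg hc]
      exact Set.mem_insert _ _
    exact mono (Set.insert_subset_insert (Set.subset_iUnion _ n)) hcond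

end L12aux

namespace L12aux

section Max
variable {Δ : Set Fm} {α : Fm}
variable (hna : ¬ L12 Δ α) (hcl : ∀ β, L12 Δ β → β ∈ Δ)
  (hmax : ∀ β, β ∉ Δ → L12 (insert β Δ) α)

include hna hcl hmax

theorem sat {β γ : Fm} (h : (β.disj γ) ∈ Δ) : β ∈ Δ ∨ γ ∈ Δ := by
  by_contra hc
  push_neg at hc
  have h1 : L12 Δ (β.impl α) := ded (hmax β hc.1)
  have h2 : L12 Δ (γ.impl α) := ded (hmax γ hc.2)
  exact hna (L12.mp (L12.mp (L12.mp (L12.a8 β γ α) h1) h2) (L12.prem h))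

theorem tndmem (β : Fm) : β ∈ Δ ∨ β.neg ∈ Δ :=
  sat hna hcl hmax (hcl _ (L12.tnd β))

theorem notboth {β : Fm} (h1 : β.circ ∈ Δ) (h2 : β ∈ Δ) (h3 : β.neg ∈ Δ) : False :=
  hna (L12.mp (L12.mp (L12.mp (L12.bc1 β α) (L12.prem h1)) (L12.prem h2)) (L12.prem h3))

theorem circ_mem {β : Fm} : β.circ ∈ Δ ↔ ¬(β ∈ Δ ∧ β.neg ∈ Δ) := by
  constructor
  · rintro h ⟨h2, h3⟩
    exact notboth hna hcl hmax h h2 h3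
  · intro h
    rcases sat hna hcl hmax (hcl _ (L12.ciw β)) with h1 | h1
    · exact h1
    · exact absurd ⟨hcl _ (L12.mp (L12.a3 β β.neg) (L12.prem h1)),
        hcl _ (L12.mp (L12.a4 β β.neg) (L12.prem h1))⟩ h

theorem conj_mem {β γ : Fm} : (β.conj γ) ∈ Δ ↔ β ∈ Δ ∧ γ ∈ Δ := by
  constructor
  · intro h
    exact ⟨hcl _ (L12.mp (L12.a3 β γ) (L12.prem h)),
      hcl _ (L12.mp (L12.a4 β γ) (L12.prem h))⟩
  · rintro ⟨h1, h2⟩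
    exact hcl _ (L12.mp (L12.mp (L12.a5 β γ) (L12.prem h1)) (L12.prem h2))

theorem disj_mem {β γ : Fm} : (β.disj γ) ∈ Δ ↔ β ∈ Δ ∨ γ ∈ Δ := by
  constructor
  · exact sat hna hcl hmax
  · rintro (h | h)
    · exact hcl _ (L12.mp (L12.a6 β γ) (L12.prem h))
    · exact hcl _ (L12.mp (L12.a7 β γ) (L12.prem h))

theorem impl_mem {β γ : Fm} : (β.impl γ) ∈ Δ ↔ (β ∈ Δ → γ ∈ Δ) := by
  constructor
  · intro h hb
    exact hcl _ (L12.mp (L12.prem h) (L12.prem hb))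
  · intro h
    rcases sat hna hcl hmax (hcl _ (L12.a9 β γ)) with h1 | h1
    · exact hcl _ (L12.mp (L12.a1 γ β) (L12.prem (h h1)))
    · exact h1

theorem negneg_mem {β : Fm} : β.neg.neg ∈ Δ ↔ β ∈ Δ := by
  constructor
  · intro h; exact hcl _ (L12.mp (L12.cf β) (L12.prem h))
  · intro h; exact hcl _ (L12.mp (L12.ce β) (L12.prem h))

theorem circneg_mem {β : Fm} : β.neg.circ.neg ∈ Δ ↔ β.circ.neg ∈ Δ := by
  have h1 : L12 Δ (β.neg.circ.neg.impl β.circ.neg) :=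
    L12.mp (L12.a3 _ _) (L12.ip1 β)
  have h2 : L12 Δ (β.circ.neg.impl β.neg.circ.neg) :=
    L12.mp (L12.a4 _ _) (L12.ip1 β)
  constructor
  · intro h; exact hcl _ (L12.mp h1 (L12.prem h))
  · intro h; exact hcl _ (L12.mp h2 (L12.prem h))

theorem negcirc_mem {β : Fm} (h : β.circ ∉ Δ) : β.circ.neg ∈ Δ :=
  (tndmem hna hcl hmax β.circ).resolve_left h

theorem negcirccirc_mem {β : Fm} :
    β.circ.circ.neg ∈ Δ ↔ (β.circ ∈ Δ ∧ β.circ.neg ∈ Δ) := by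
  constructor
  · intro h
    have hccc : β.circ.circ.circ ∈ Δ := hcl _ (L12.cc1 β)
    have hcc : β.circ.circ ∉ Δ := fun hcc => notboth hna hcl hmax hccc hcc h
    exact not_not.mp ((circ_mem hna hcl hmax (β := β.circ)).not.1 hcc)
  · rintro ⟨h1, h2⟩
    have hcc : β.circ.circ ∉ Δ := fun hcc =>
      (circ_mem hna hcl hmax).1 hcc ⟨h1, h2⟩
    exact (tndmem hna hcl hmax β.circ.circ).resolve_left hcc

end Max
end L12aux

namespace L12aux

theorem sound {Γ : Set Fm} {α : Fm} (h : L12 Γ α) : NmCons12 Γ α := by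
  intro v hv hΓ
  induction h with
  | prem h => exact hΓ _ h
  | mp _ _ ih1 ih2 =>
    rw [hv.himpl] at ih1
    simp [ih2] at ih1
    exact ih1
  | a1 a b =>
    simp only [hv.himpl]
    cases (v a).1 <;> cases (v b).1 <;> simp
  | a2 a b c =>
    simp only [hv.himpl]
    cases (v a).1 <;> cases (v b).1 <;> cases (v c).1 <;> simp
  | a3 a b =>
    simp only [hv.himpl, hv.hconj]
    cases (v a).1 <;> cases (v b).1 <;> simp
  | a4 a b =>
    simp only [hv.himpl, hv.hconj]
    cases (v a).1 <;> cases (v b).1 <;> simp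
  | a5 a b =>
    simp only [hv.himpl, hv.hconj]
    cases (v a).1 <;> cases (v b).1 <;> simp
  | a6 a b =>
    simp only [hv.himpl, hv.hdisj]
    cases (v a).1 <;> cases (v b).1 <;> simp
  | a7 a b =>
    simp only [hv.himpl, hv.hdisj]
    cases (v a).1 <;> cases (v b).1 <;> simp
  | a8 a b c =>
    simp only [hv.himpl, hv.hdisj]
    cases (v a).1 <;> cases (v b).1 <;> cases (v c).1 <;> simp
  | a9 a b =>
    simp only [hv.himpl, hv.hdisj]
    cases (v a).1 <;> cases (v b).1 <;> simp
  | tnd a =>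
    have m := (hv.mem a).1
    simp only [hv.hdisj, hv.hneg, negOp]
    exact m
  | bc1 a b =>
    simp only [hv.himpl, hv.hneg, hv.hcirc, negOp, circOp]
    cases (v a).1 <;> cases (v a).2.1 <;> cases (v b).1 <;> simp
  | ciw a =>
    simp only [hv.hdisj, hv.hconj, hv.hneg, hv.hcirc, negOp, circOp]
    cases (v a).1 <;> cases (v a).2.1 <;> simp
  | cc1 a =>
    have m := (hv.mem a).2
    simp only [hv.hcirc, circOp]
    revert m
    cases (v a).1 <;> cases (v a).2.1 <;> cases (v a).2.2 <;> simp
  | cf a =>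
    simp only [hv.himpl, hv.hneg, negOp]
    cases (v a).1 <;> simp
  | ce a =>
    simp only [hv.himpl, hv.hneg, negOp]
    cases (v a).1 <;> simp
  | ip1 a =>
    simp only [Fm.biim, hv.hconj, hv.himpl, hv.hneg, hv.hcirc, negOp, circOp]
    cases (v a).2.2 <;> simp

end L12aux

namespace L12aux

theorem complete {Γ : Set Fm} {α : Fm} (hn : ¬ L12 Γ α) : ¬ NmCons12 Γ α := by
  classical
  obtain ⟨Δ, hΓΔ, hna, hcl, hmax⟩ := lindenbaum hn
  set v : Fm → Trip :=
    fun φ => (decide (φ ∈ Δ), decide (φ.neg ∈ Δ), decide (φ.circ.neg ∈ Δ)) with hv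
  have hval : Val12 v := by
    constructor
    · -- mem
      intro φ
      constructor
      · rw [hv]
        simp only [← Bool.decide_or]
        exact decide_eq_true (tndmem hna hcl hmax φ)
      · rw [hv]
        simp only [← Bool.decide_and, ← decide_not, ← Bool.decide_or]
        apply decide_eq_true
        by_cases hb : φ ∈ Δ ∧ φ.neg ∈ Δ
        · left
          exact negcirc_mem hna hcl hmax
            (fun hc => notboth hna hcl hmax hc hb.1 hb.2)
        · right; exact hb
    · -- conj
      intro a b
      rw [hv]
      simp only
      rw [decide_eq_decide.mpr (conj_mem hna hcl hmax), Bool.decide_and]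
    · -- disj
      intro a b
      rw [hv]
      simp only
      rw [decide_eq_decide.mpr (disj_mem hna hcl hmax), Bool.decide_or]
    · -- impl
      intro a b
      rw [hv]
      simp only
      by_cases h1 : a ∈ Δ <;> by_cases h2 : b ∈ Δ <;>
        simp [h1, h2, impl_mem hna hcl hmax]
    · -- neg
      intro a
      rw [hv]
      simp only [negOp]
      refine Prod.ext rfl (Prod.ext ?_ ?_) <;> simp only
      · exact decide_eq_decide.mpr (negneg_mem hna hcl hmax)
      · exact decide_eq_decide.mpr (circneg_mem hna hcl hmax)
    · -- circ
      intro a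
      rw [hv]
      simp only [circOp]
      refine Prod.ext ?_ (Prod.ext rfl ?_) <;> simp only
      · by_cases h1 : a ∈ Δ <;> by_cases h2 : a.neg ∈ Δ <;>
          simp [h1, h2, circ_mem hna hcl hmax]
      · by_cases h1 : a ∈ Δ <;> by_cases h2 : a.neg ∈ Δ <;>
          by_cases h3 : a.circ.neg ∈ Δ <;>
          simp [h1, h2, h3, negcirccirc_mem hna hcl hmax, circ_mem hna hcl hmax]
  intro hcons
  have := hcons v hval (fun γ hγ => by
    rw [hv]; exact decide_eq_true (L12.prem (hΓΔ hγ) |> hcl γ))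
  rw [hv] at this
  simp only [decide_eq_true_eq] at this
  exact hna (L12.prem this)

end L12aux

/-- Soundness and completeness of L₁² with respect to M₁². -/
theorem stmt5 (Γ : Set Fm) (α : Fm) : L12 Γ α ↔ NmCons12 Γ α := by
  constructor
  · exact L12aux.sound
  · intro h
    by_contra hn
    exact L12aux.complete hn h
end

section
/- For every n ≥ 0 and every formula α, the restricted non-deterministic matrix R_n^0 = ⟨M_0, F_n^0⟩ validates (cc^n): ⊨_{R_n^0} ∘^{n+2}α. -/
/-- Iterated consistency operator: `circN n α` is ∘^n α. -/
def circN : Nat → Fm → Fm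
  | 0, a => a
  | n + 1, a => Fm.circ (circN n a)

/-- Snapshots: pairs of Booleans. T=(1,0), t=(1,1), F=(0,1). -/
abbrev Pr := Bool × Bool

/-- The three-element domain B₀ = {x : x₁ ∨ x₂ = 1}. -/
def inB0 (x : Pr) : Prop := (x.1 || x.2) = true

/-- Valuations over the Nmatrix M₀ for mbCciw (designated values: first coordinate 1). -/
structure Val0 (ϑ : Fm → Pr) : Prop where
  mem : ∀ φ : Fm, inB0 (ϑ φ)
  hconj : ∀ α β : Fm, (ϑ (α.conj β)).1 = ((ϑ α).1 && (ϑ β).1)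
  hdisj : ∀ α β : Fm, (ϑ (α.disj β)).1 = ((ϑ α).1 || (ϑ β).1)
  himpl : ∀ α β : Fm, (ϑ (α.impl β)).1 = (!(ϑ α).1 || (ϑ β).1)
  hneg : ∀ α : Fm, (ϑ α.neg).1 = (ϑ α).2
  hcirc : ∀ α : Fm, (ϑ α.circ).1 = !((ϑ α).1 && (ϑ α).2)

/-- The restriction defining the admissible valuations F_n^0 of the RNmatrix R_n^0:
if ϑ(∘ⁿα) ∈ {T, F} then ϑ(∘ⁿ⁺¹α) = T. -/
def Restr (n : Nat) (ϑ : Fm → Pr) : Prop :=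
  ∀ α : Fm, (ϑ (circN n α) = (true, false) ∨ ϑ (circN n α) = (false, true)) →
    ϑ (circN (n + 1) α) = (true, false)

lemma circN_circ (n : Nat) (a : Fm) : circN n a.circ = circN (n+1) a := by
  induction n with
  | zero => rfl
  | succ k ih => simp [circN, ih]

/-- The RNmatrix R_n^0 validates (cc^n) ∘^{n+2}α. -/
theorem stmt17 (n : Nat) (α : Fm) :
    ∀ ϑ : Fm → Pr, Val0 ϑ → Restr n ϑ → (ϑ (circN (n + 2) α)).1 = true := by
  intro ϑ hv hr
  have hmem := hv.mem (circN n α)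
  have hstep : ∀ m : Nat, (circN m α).circ = circN (m+1) α := fun m => rfl
  have fromT : ϑ (circN (n+1) α) = (true, false) → (ϑ (circN (n + 2) α)).1 = true := by
    intro key
    show (ϑ ((circN (n+1) α).circ)).1 = true
    rw [hv.hcirc, key]; rfl
  rcases h : ϑ (circN n α) with ⟨x, y⟩
  match x, y with
  | true, false => exact fromT (hr α (Or.inl h))
  | false, true => exact fromT (hr α (Or.inr h))
  | false, false => simp [inB0, h] at hmem
  | true, true =>
    have hc1 := hv.hcirc (circN n α)
    rw [hstep] at hc1
    have h1 : ϑ (circN (n+1) α) = (false, true) := by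
      have hm := hv.mem (circN (n+1) α)
      rw [h] at hc1
      simp at hc1
      rcases hh : ϑ (circN (n+1) α) with ⟨u, v⟩
      rw [hh] at hc1 hm
      simp at hc1
      subst hc1
      simpa [inB0] using hm
    have := hr (Fm.circ α) (by rw [circN_circ]; exact Or.inr h1)
    rw [circN_circ] at this
    have : ϑ (circN (n + 2) α) = (true, false) := this
    rw [this]
end
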